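/- Let T1, T2, T12 be the following bounded operators on ℓ²(ℕ, ℂ) with standard orthonormal basis (e_i): T1 e_0 = 0 and T1 e_i = √(i/(i+3)) e_{i−1} for i ≥ 1; T2 e_0 = 0, T2 e_1 = √(13/25) e_0, and T2 e_i = √(i/(i+1)) e_{i−1} for i ≥ 2; T12 e_0 = √(1/5) e_0 and T12 e_i = 0 for i ≥ 1. Then the block operator T = [[T1, T12],[0, T2]] on ℓ²(ℕ,ℂ) ⊕ ℓ²(ℕ,ℂ) is a 2-hypercontraction, while T2 is not a 2-hypercontraction. -/

import Mathlib

open ContinuousLinearMap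

noncomputable section

/-- `T` is an `n`-hypercontraction. -/
def IsHypercontraction {H : Type*} [NormedAddCommGroup H] [InnerProductSpace ℂ H]
    [CompleteSpace H] (T : H →L[ℂ] H) (n : ℕ) : Prop :=
  ∀ k : ℕ, 1 ≤ k → k ≤ n →
    (∑ j ∈ Finset.range (k + 1), ((-1 : ℂ) ^ j * (k.choose j : ℂ)) •
      ((ContinuousLinearMap.adjoint T) ^ j * T ^ j)).IsPositive

local notation "ℓ²" => lp (fun _ : ℕ => ℂ) 2
local notation "e" i => lp.single (E := fun _ : ℕ => ℂ) 2 i (1:ℂ)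

section Hilbert
variable {H : Type*} [NormedAddCommGroup H] [InnerProductSpace ℂ H] [CompleteSpace H]

private lemma sa_D (A : H →L[ℂ] H) (k : ℕ) :
    IsSelfAdjoint (∑ j ∈ Finset.range (k + 1), ((-1 : ℂ) ^ j * (k.choose j : ℂ)) •
      ((ContinuousLinearMap.adjoint A) ^ j * A ^ j)) := by
  rw [IsSelfAdjoint, ← star_eq_adjoint]
  simp only [star_sum, star_smul, star_mul, star_pow, star_star]
  congr 1; ext j : 1; congr 1
  simp [mul_comm]

private lemma reApply_D1 (A : H →L[ℂ] H) (z : H) :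
    (∑ j ∈ Finset.range 2, ((-1 : ℂ) ^ j * ((1:ℕ).choose j : ℂ)) •
      ((ContinuousLinearMap.adjoint A) ^ j * A ^ j)).reApplyInnerSelf z
      = ‖z‖^2 - ‖A z‖^2 := by
  simp only [reApplyInnerSelf, Finset.sum_range_succ, Finset.range_zero, Finset.sum_empty,
    zero_add, add_apply, smul_apply, mul_apply, pow_zero, pow_one]
  simp only [inner_add_left, inner_smul_left, ContinuousLinearMap.one_apply, one_mul, mul_one,
    ContinuousLinearMap.mul_apply]
  rw [adjoint_inner_left]
  simp only [@inner_self_eq_norm_sq_to_K ℂ]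
  simp [Nat.choose]
  simp [← Complex.ofReal_pow]
  ring

private lemma reApply_D2 (A : H →L[ℂ] H) (z : H) :
    (∑ j ∈ Finset.range 3, ((-1 : ℂ) ^ j * ((2:ℕ).choose j : ℂ)) •
      ((ContinuousLinearMap.adjoint A) ^ j * A ^ j)).reApplyInnerSelf z
      = ‖z‖^2 - 2 * ‖A z‖^2 + ‖A (A z)‖^2 := by
  simp only [reApplyInnerSelf, Finset.sum_range_succ, Finset.range_zero, Finset.sum_empty,
    zero_add, add_apply, smul_apply, mul_apply, pow_zero, pow_one, pow_succ]
  simp only [inner_add_left, inner_smul_left, ContinuousLinearMap.one_apply, one_mul, mul_one,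
    ContinuousLinearMap.mul_apply]
  rw [adjoint_inner_left, adjoint_inner_left, adjoint_inner_left]
  simp only [@inner_self_eq_norm_sq_to_K ℂ]
  simp [Nat.choose]
  simp [← Complex.ofReal_pow]
  ring

end Hilbert

private lemma coord_hasSum (A : ℓ² →L[ℂ] ℓ²) (x : ℓ²) (i : ℕ) :
    HasSum (fun j : ℕ => x j * (A (e j) : ∀ _ : ℕ, ℂ) i) ((A x : ∀ _ : ℕ, ℂ) i) := by
  have h1 : HasSum (fun j : ℕ => lp.single 2 j (x j)) x :=
    lp.hasSum_single ENNReal.ofNat_ne_top x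
  have h2 : HasSum (fun j : ℕ => A (lp.single 2 j (x j))) (A x) := h1.mapL A
  have h3 : HasSum (fun j : ℕ => (innerSL ℂ (e i)) (A (lp.single 2 j (x j))))
      ((innerSL ℂ (e i)) (A x)) := h2.mapL _
  have key : ∀ (f : ℓ²), (innerSL ℂ (e i)) f = f i := by
    intro f; simp [innerSL_apply_apply, lp.inner_single_left]
  rw [key] at h3
  convert h3 using 2 with j
  have : lp.single (E := fun _ : ℕ => ℂ) 2 j (x j) = x j • (e j) := by
    rw [← lp.single_smul]; norm_num
  rw [this, map_smul, key]
  simp [key]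

private lemma shift_coord (A : ℓ² →L[ℂ] ℓ²) (w : ℕ → ℂ)
    (h0 : A (e 0) = 0) (hs : ∀ j : ℕ, A (e (j+1)) = w j • (e j)) (x : ℓ²) (i : ℕ) :
    (A x : ∀ _ : ℕ, ℂ) i = w i * x (i+1) := by
  refine (coord_hasSum A x i).unique ?_
  have : (fun j : ℕ => x j * (A (e j) : ∀ _ : ℕ, ℂ) i)
      = fun j : ℕ => if j = i + 1 then w i * x (i+1) else 0 := by
    funext j
    rcases j with _ | k
    · simp [h0]
    · rw [hs k]
      rcases eq_or_ne k i with rfl | hk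
      · simp [lp.coeFn_smul, lp.single_apply_self, mul_comm]
      · have : (k:ℕ) + 1 ≠ i + 1 := by omega
        simp [lp.coeFn_smul, this, lp.single_apply_ne _ _ _ (by omega : i ≠ k), Pi.single_apply, hk, hk.symm]
  rw [this]
  exact hasSum_ite_eq (i+1) _

private lemma diag0_coord (A : ℓ² →L[ℂ] ℓ²) (c : ℂ)
    (h0 : A (e 0) = c • (e 0)) (hs : ∀ j : ℕ, A (e (j+1)) = 0) (x : ℓ²) (i : ℕ) :
    (A x : ∀ _ : ℕ, ℂ) i = if i = 0 then c * x 0 else 0 := by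
  refine (coord_hasSum A x i).unique ?_
  have : (fun j : ℕ => x j * (A (e j) : ∀ _ : ℕ, ℂ) i)
      = fun j : ℕ => if j = 0 then (if i = 0 then c * x 0 else 0) else 0 := by
    funext j
    rcases j with _ | k
    · rw [h0]
      rcases eq_or_ne i 0 with rfl | hi
      · simp [lp.coeFn_smul, lp.single_apply_self, mul_comm]
      · simp [lp.coeFn_smul, hi, lp.single_apply_ne _ _ _ hi]
    · simp [hs k]
  rw [this]
  exact hasSum_ite_eq 0 _

private lemma hasSum_norm_sq (f : ℓ²) : HasSum (fun i => ‖(f : ∀ _ : ℕ, ℂ) i‖^2) (‖f‖^2) := by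
  have h := lp.hasSum_norm (p := 2) (f := f) (by norm_num)
  simp only [ENNReal.toReal_ofNat] at h
  convert h using 2 with i
  · rw [← Real.rpow_natCast]; norm_num
  · rw [← Real.rpow_natCast]; norm_num

private lemma norm_sqrt_mul_sq (r : ℝ) (hr : 0 ≤ r) (z : ℂ) :
    ‖((Real.sqrt r : ℝ):ℂ) * z‖^2 = r * ‖z‖^2 := by
  rw [norm_mul, mul_pow, Complex.norm_real, Real.norm_eq_abs, abs_of_nonneg (Real.sqrt_nonneg r),
    Real.sq_sqrt hr]

private lemma cross_sq_le (α β : ℝ) (hα : 0 ≤ α) (hβ : 0 ≤ β) (z w : ℂ) :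
    ‖(α:ℂ)*z + (β:ℂ)*w‖^2 ≤ (α^2+β^2) * (‖z‖^2 + ‖w‖^2) := by
  have h := norm_add_le ((α:ℂ)*z) ((β:ℂ)*w)
  rw [norm_mul, norm_mul, Complex.norm_real, Complex.norm_real, Real.norm_eq_abs,
    Real.norm_eq_abs, abs_of_nonneg hα, abs_of_nonneg hβ] at h
  nlinarith [norm_nonneg ((α:ℂ)*z + (β:ℂ)*w), norm_nonneg z, norm_nonneg w,
    sq_nonneg (α*‖w‖ - β*‖z‖)]

private lemma cross_sq_ge (α β : ℝ) (hα : 0 ≤ α) (hβ : 0 ≤ β) (z w : ℂ) :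
    α^2*‖z‖^2 + β^2*‖w‖^2 - 2*(α*β)*(‖z‖*‖w‖) ≤ ‖(α:ℂ)*z + (β:ℂ)*w‖^2 := by
  set N := ‖(α:ℂ)*z + (β:ℂ)*w‖ with hN
  have hN0 : 0 ≤ N := norm_nonneg _
  have h1 : α*‖z‖ ≤ N + β*‖w‖ := by
    calc α*‖z‖ = ‖(α:ℂ)*z‖ := by
          rw [norm_mul, Complex.norm_real, Real.norm_eq_abs, abs_of_nonneg hα]
      _ = ‖((α:ℂ)*z + (β:ℂ)*w) - (β:ℂ)*w‖ := by ring_nf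
      _ ≤ N + ‖(β:ℂ)*w‖ := (norm_sub_le _ _)
      _ = N + β*‖w‖ := by
          rw [norm_mul, Complex.norm_real, Real.norm_eq_abs, abs_of_nonneg hβ]
  have h2 : β*‖w‖ ≤ N + α*‖z‖ := by
    calc β*‖w‖ = ‖(β:ℂ)*w‖ := by
          rw [norm_mul, Complex.norm_real, Real.norm_eq_abs, abs_of_nonneg hβ]
      _ = ‖((α:ℂ)*z + (β:ℂ)*w) - (α:ℂ)*z‖ := by ring_nf
      _ ≤ N + ‖(α:ℂ)*z‖ := (norm_sub_le _ _)
      _ = N + α*‖z‖ := by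
          rw [norm_mul, Complex.norm_real, Real.norm_eq_abs, abs_of_nonneg hα]
  have := sq_le_sq' (by linarith : -N ≤ α*‖z‖ - β*‖w‖) (by linarith : α*‖z‖ - β*‖w‖ ≤ N)
  nlinarith [this]


private lemma split1' (g : ℕ → ℝ) (S : ℝ) (h : HasSum g S) : S = g 0 + ∑' i, g (i+1) := by
  have h2 := Summable.sum_add_tsum_nat_add (f := g) 1 h.summable
  rw [h.tsum_eq] at h2
  simp [Finset.sum_range_succ] at h2
  linarith

private lemma split2' (g : ℕ → ℝ) (S : ℝ) (h : HasSum g S) : S = g 0 + g 1 + ∑' i, g (i+2) := by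
  have h2 := Summable.sum_add_tsum_nat_add (f := g) 2 h.summable
  rw [h.tsum_eq] at h2
  simp [Finset.sum_range_succ] at h2
  linarith

private lemma split3' (g : ℕ → ℝ) (S : ℝ) (h : HasSum g S) :
    S = g 0 + g 1 + g 2 + ∑' i, g (i+3) := by
  have h2 := Summable.sum_add_tsum_nat_add (f := g) 3 h.summable
  rw [h.tsum_eq] at h2
  simp [Finset.sum_range_succ] at h2
  linarith

private lemma abstractA (a b au as : ℕ → ℝ) (A B U S : ℝ)
    (ha : HasSum a A) (hb : HasSum b B) (hu : HasSum au U) (hs : HasSum as S)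
    (hann : ∀ i, 0 ≤ a i) (hbnn : ∀ j, 0 ≤ b j)
    (hU0 : au 0 ≤ (9/20)*(a 1 + b 0))
    (hUsucc : ∀ i, au (i+1) = ((i:ℝ)+2)/((i:ℝ)+5) * a (i+2))
    (hS0 : as 0 = 13/25 * b 1)
    (hSsucc : ∀ j, as (j+1) = ((j:ℝ)+2)/((j:ℝ)+3) * b (j+2)) :
    U + S ≤ A + B := by
  have Sa2 : Summable (fun i => a (i+2)) := (summable_nat_add_iff 2).2 ha.summable
  have Sb2 : Summable (fun j => b (j+2)) := (summable_nat_add_iff 2).2 hb.summable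
  have Su1 : Summable (fun i => au (i+1)) := (summable_nat_add_iff 1).2 hu.summable
  have Ss1 : Summable (fun j => as (j+1)) := (summable_nat_add_iff 1).2 hs.summable
  have tailu : ∑' i, au (i+1) ≤ ∑' i, a (i+2) := by
    refine Su1.tsum_le_tsum (fun i => ?_) Sa2
    rw [hUsucc i]
    refine mul_le_of_le_one_left (hann _) ?_
    rw [div_le_one (by positivity)]; linarith
  have tails : ∑' j, as (j+1) ≤ ∑' j, b (j+2) := by
    refine Ss1.tsum_le_tsum (fun j => ?_) Sb2
    rw [hSsucc j]
    refine mul_le_of_le_one_left (hbnn _) ?_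
    rw [div_le_one (by positivity)]; linarith
  have ex := split2' _ _ ha
  have ey := split2' _ _ hb
  have eu := split1' _ _ hu
  have es := split1' _ _ hs
  have n0 := hann 0; have n1 := hann 1; have n2 := hbnn 0; have n3 := hbnn 1
  linarith

private lemma abstractB (a b au as av aw : ℕ → ℝ) (A B U S V W : ℝ)
    (ha : HasSum a A) (hb : HasSum b B) (hu : HasSum au U) (hs : HasSum as S)
    (hv : HasSum av V) (hw : HasSum aw W)
    (hann : ∀ i, 0 ≤ a i) (hbnn : ∀ j, 0 ≤ b j)
    (hU0 : au 0 ≤ (9/20)*(a 1 + b 0))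
    (hUsucc : ∀ i, au (i+1) = ((i:ℝ)+2)/((i:ℝ)+5) * a (i+2))
    (hSsucc : ∀ j, as (j+1) = ((j:ℝ)+2)/((j:ℝ)+3) * b (j+2))
    (hHB2 : 2*au 1 + 2*as 0 ≤ a 2 + b 1 + av 0)
    (hVsucc : ∀ i, av (i+1) = (((i:ℝ)+2)/((i:ℝ)+5)) * ((((i:ℝ)+3)/((i:ℝ)+6)) * a (i+3)))
    (hW0 : aw 0 = 13/25*(2/3*b 2))
    (hWsucc : ∀ j, aw (j+1) = (((j:ℝ)+2)/((j:ℝ)+3)) * ((((j:ℝ)+3)/((j:ℝ)+4)) * b (j+3))) :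
    2*U + 2*S ≤ A + B + V + W := by
  have Sa3 : Summable (fun i => a (i+3)) := (summable_nat_add_iff 3).2 ha.summable
  have Sb3 : Summable (fun j => b (j+3)) := (summable_nat_add_iff 3).2 hb.summable
  have Su2 : Summable (fun i => au (i+2)) := (summable_nat_add_iff 2).2 hu.summable
  have Ss2 : Summable (fun j => as (j+2)) := (summable_nat_add_iff 2).2 hs.summable
  have Sv1 : Summable (fun i => av (i+1)) := (summable_nat_add_iff 1).2 hv.summable
  have Sw1 : Summable (fun j => aw (j+1)) := (summable_nat_add_iff 1).2 hw.summable
  have tailx : 2 * (∑' i, au (i+2)) ≤ (∑' i, a (i+3)) + (∑' i, av (i+1)) := by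
    rw [← tsum_mul_left, ← Sa3.tsum_add Sv1]
    refine (Su2.mul_left 2).tsum_le_tsum (fun i => ?_) (Sa3.add Sv1)
    have h1 := hUsucc (i+1)
    rw [show ((((i:ℕ)+1:ℕ):ℝ)+2)/((((i:ℕ)+1:ℕ):ℝ)+5) = (((i:ℝ)+3)/((i:ℝ)+6))
      by push_cast; ring] at h1
    rw [show i+1+1 = i+2 by omega, show i+1+2 = i+3 by omega] at h1
    rw [h1, hVsucc i]
    have h5 : ((i:ℝ)+5) ≠ 0 := by positivity
    have h6 : ((i:ℝ)+6) ≠ 0 := by positivity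
    have key : 1 + (((i:ℝ)+2)/((i:ℝ)+5))*(((i:ℝ)+3)/((i:ℝ)+6)) - 2*(((i:ℝ)+3)/((i:ℝ)+6))
        = 6/((((i:ℝ)+5))*(((i:ℝ)+6))) := by field_simp; ring
    have hpos : (0:ℝ) ≤ 6/((((i:ℝ)+5))*(((i:ℝ)+6))) := by positivity
    have key2 := congrArg (fun r => r * a (i+3)) key
    nlinarith [key2, mul_nonneg hpos (hann (i+3))]
  have taily : 2 * (∑' j, as (j+2)) ≤ (∑' j, b (j+3)) + (∑' j, aw (j+1)) := by
    rw [← tsum_mul_left, ← Sb3.tsum_add Sw1]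
    refine (Ss2.mul_left 2).tsum_le_tsum (fun j => ?_) (Sb3.add Sw1)
    have h1 := hSsucc (j+1)
    rw [show ((((j:ℕ)+1:ℕ):ℝ)+2)/((((j:ℕ)+1:ℕ):ℝ)+3) = (((j:ℝ)+3)/((j:ℝ)+4))
      by push_cast; ring] at h1
    rw [show j+1+1 = j+2 by omega, show j+1+2 = j+3 by omega] at h1
    rw [h1, hWsucc j]
    have h3 : ((j:ℝ)+3) ≠ 0 := by positivity
    have h4 : ((j:ℝ)+4) ≠ 0 := by positivity
    have key : 1 + (((j:ℝ)+2)/((j:ℝ)+3))*(((j:ℝ)+3)/((j:ℝ)+4)) = 2*(((j:ℝ)+3)/((j:ℝ)+4)) := by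
      field_simp; ring
    have key2 := congrArg (fun r => r * b (j+3)) key
    nlinarith [key2, hbnn (j+3)]
  have hS1 : as 1 = 2/3 * b 2 := by
    have := hSsucc 0; norm_num at this; convert this using 2
  have ex := split3' _ _ ha
  have ey := split3' _ _ hb
  have eu := split2' _ _ hu
  have es := split2' _ _ hs
  have ev := split1' _ _ hv
  have ew := split1' _ _ hw
  have n0 := hann 0; have n1 := hann 1; have n2 := hbnn 0
  have n3 := hbnn 1; have n4 := hbnn 2
  have HB3 : 2 * as 1 ≤ b 2 + aw 0 := by rw [hS1, hW0]; linarith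
  linarith

set_option maxHeartbeats 1000000 in
private lemma key_ineqs {T₁ T₂ T₁₂ : ℓ² →L[ℂ] ℓ²}
    (hc₁ : ∀ (f : ℓ²) (i : ℕ),
      (T₁ f : ∀ _ : ℕ, ℂ) i = ((Real.sqrt (((i:ℝ)+1)/((i:ℝ)+4)) : ℝ):ℂ) * f (i+1))
    (hc₂ : ∀ (f : ℓ²) (i : ℕ), (T₂ f : ∀ _ : ℕ, ℂ) i =
      (if i = 0 then ((Real.sqrt (13/25) : ℝ):ℂ) else ((Real.sqrt (((i:ℝ)+1)/((i:ℝ)+2)) : ℝ):ℂ))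
        * f (i+1))
    (hc₁₂ : ∀ (f : ℓ²) (i : ℕ),
      (T₁₂ f : ∀ _ : ℕ, ℂ) i = if i = 0 then ((Real.sqrt (1/5) : ℝ):ℂ) * f 0 else 0)
    (x y : ℓ²) :
    ‖T₁ x + T₁₂ y‖^2 + ‖T₂ y‖^2 ≤ ‖x‖^2 + ‖y‖^2 ∧
    2*‖T₁ x + T₁₂ y‖^2 + 2*‖T₂ y‖^2 ≤ ‖x‖^2 + ‖y‖^2
      + ‖T₁ (T₁ x + T₁₂ y) + T₁₂ (T₂ y)‖^2 + ‖T₂ (T₂ y)‖^2 := by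
  set u := T₁ x + T₁₂ y with hu
  set s := T₂ y with hs
  set v := T₁ u + T₁₂ s with hv
  set t := T₂ s with ht
  have cu : ∀ i : ℕ, (u : ∀ _ : ℕ, ℂ) i =
      ((Real.sqrt (((i:ℝ)+1)/((i:ℝ)+4)) : ℝ):ℂ) * x (i+1)
        + (if i = 0 then ((Real.sqrt (1/5) : ℝ):ℂ) * y 0 else 0) := by
    intro i
    rw [hu, lp.coeFn_add, Pi.add_apply, hc₁ x i, hc₁₂ y i]
  have cu_succ : ∀ i : ℕ, ‖(u : ∀ _ : ℕ, ℂ) (i+1)‖^2 =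
      (((i:ℝ)+2)/((i:ℝ)+5)) * ‖(x : ∀ _ : ℕ, ℂ) (i+2)‖^2 := by
    intro i
    have h := cu (i+1)
    rw [if_neg (by omega)] at h
    rw [h, add_zero]
    rw [show ((((i:ℕ)+1:ℕ):ℝ)+1)/((((i:ℕ)+1:ℕ):ℝ)+4) = (((i:ℝ)+2)/((i:ℝ)+5)) by push_cast; ring]
    exact norm_sqrt_mul_sq _ (by positivity) _
  have cu1val : (u : ∀ _ : ℕ, ℂ) 1 = ((Real.sqrt (2/5) : ℝ):ℂ) * x 2 := by
    have h := cu 1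
    rw [if_neg (by omega), add_zero] at h
    rw [h, show ((((1:ℕ)):ℝ)+1)/((((1:ℕ)):ℝ)+4) = (2/5 : ℝ) by norm_num]
  have cs : ∀ i : ℕ, (s : ∀ _ : ℕ, ℂ) i =
      (if i = 0 then ((Real.sqrt (13/25) : ℝ):ℂ) else ((Real.sqrt (((i:ℝ)+1)/((i:ℝ)+2)) : ℝ):ℂ))
        * y (i+1) := fun i => by rw [hs, hc₂ y i]
  have cs0val : (s : ∀ _ : ℕ, ℂ) 0 = ((Real.sqrt (13/25) : ℝ):ℂ) * y 1 := by
    have h := cs 0; rwa [if_pos rfl] at h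
  have cs1val : (s : ∀ _ : ℕ, ℂ) 1 = ((Real.sqrt (2/3) : ℝ):ℂ) * y 2 := by
    have h := cs 1
    rw [if_neg (by omega), show ((((1:ℕ)):ℝ)+1)/((((1:ℕ)):ℝ)+2) = (2/3 : ℝ) by norm_num] at h
    exact h
  have cs_succ : ∀ j : ℕ, ‖(s : ∀ _ : ℕ, ℂ) (j+1)‖^2 =
      (((j:ℝ)+2)/((j:ℝ)+3)) * ‖(y : ∀ _ : ℕ, ℂ) (j+2)‖^2 := by
    intro j
    have h := cs (j+1)
    rw [if_neg (by omega)] at h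
    rw [h, show ((((j:ℕ)+1:ℕ):ℝ)+1)/((((j:ℕ)+1:ℕ):ℝ)+2) = (((j:ℝ)+2)/((j:ℝ)+3))
      by push_cast; ring]
    exact norm_sqrt_mul_sq _ (by positivity) _
  have cv : ∀ i : ℕ, (v : ∀ _ : ℕ, ℂ) i =
      ((Real.sqrt (((i:ℝ)+1)/((i:ℝ)+4)) : ℝ):ℂ) * u (i+1)
        + (if i = 0 then ((Real.sqrt (1/5) : ℝ):ℂ) * s 0 else 0) := by
    intro i
    rw [hv, lp.coeFn_add, Pi.add_apply, hc₁ u i, hc₁₂ s i]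
  have cv0 : (v : ∀ _ : ℕ, ℂ) 0 =
      ((Real.sqrt (1/4) * Real.sqrt (2/5) : ℝ):ℂ) * x 2
        + ((Real.sqrt (1/5) * Real.sqrt (13/25) : ℝ):ℂ) * y 1 := by
    have h := cv 0
    rw [if_pos rfl, show ((((0:ℕ)):ℝ)+1)/((((0:ℕ)):ℝ)+4) = (1/4 : ℝ) by norm_num,
      cu1val, cs0val] at h
    rw [h]
    push_cast
    ring
  have cv_succ : ∀ i : ℕ, ‖(v : ∀ _ : ℕ, ℂ) (i+1)‖^2 =
      (((i:ℝ)+2)/((i:ℝ)+5)) * ((((i:ℝ)+3)/((i:ℝ)+6)) * ‖(x : ∀ _ : ℕ, ℂ) (i+3)‖^2) := by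
    intro i
    have h := cv (i+1)
    rw [if_neg (by omega), add_zero] at h
    rw [h, show ((((i:ℕ)+1:ℕ):ℝ)+1)/((((i:ℕ)+1:ℕ):ℝ)+4) = (((i:ℝ)+2)/((i:ℝ)+5))
      by push_cast; ring]
    rw [norm_sqrt_mul_sq _ (by positivity) _]
    congr 1
    have h2 := cu_succ (i+1)
    rw [show ((((i:ℕ)+1:ℕ):ℝ)+2)/((((i:ℕ)+1:ℕ):ℝ)+5) = (((i:ℝ)+3)/((i:ℝ)+6))
      by push_cast; ring, show i+1+1 = i+2 by omega, show i+1+2 = i+3 by omega] at h2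
    exact h2
  have ct : ∀ i : ℕ, (t : ∀ _ : ℕ, ℂ) i =
      (if i = 0 then ((Real.sqrt (13/25) : ℝ):ℂ) else ((Real.sqrt (((i:ℝ)+1)/((i:ℝ)+2)) : ℝ):ℂ))
        * s (i+1) := fun i => by rw [ht, hc₂ s i]
  have ct0 : ‖(t : ∀ _ : ℕ, ℂ) 0‖^2 = (13/25) * ((2/3) * ‖(y : ∀ _ : ℕ, ℂ) 2‖^2) := by
    have h := ct 0
    rw [if_pos rfl] at h
    rw [h, norm_sqrt_mul_sq _ (by norm_num) _]
    congr 1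
    have h2 := cs_succ 0
    rw [show ((((0:ℕ)):ℝ)+2)/((((0:ℕ)):ℝ)+3) = (2/3 : ℝ) by norm_num] at h2
    exact h2
  have ct_succ : ∀ j : ℕ, ‖(t : ∀ _ : ℕ, ℂ) (j+1)‖^2 =
      (((j:ℝ)+2)/((j:ℝ)+3)) * ((((j:ℝ)+3)/((j:ℝ)+4)) * ‖(y : ∀ _ : ℕ, ℂ) (j+3)‖^2) := by
    intro j
    have h := ct (j+1)
    rw [if_neg (by omega)] at h
    rw [h, show ((((j:ℕ)+1:ℕ):ℝ)+1)/((((j:ℕ)+1:ℕ):ℝ)+2) = (((j:ℝ)+2)/((j:ℝ)+3))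
      by push_cast; ring]
    rw [norm_sqrt_mul_sq _ (by positivity) _]
    congr 1
    have h2 := cs_succ (j+1)
    rw [show ((((j:ℕ)+1:ℕ):ℝ)+2)/((((j:ℕ)+1:ℕ):ℝ)+3) = (((j:ℝ)+3)/((j:ℝ)+4))
      by push_cast; ring, show j+1+1 = j+2 by omega, show j+1+2 = j+3 by omega] at h2
    exact h2
  have hU0 : ‖(u : ∀ _ : ℕ, ℂ) 0‖^2 ≤
      (9/20) * (‖(x : ∀ _ : ℕ, ℂ) 1‖^2 + ‖(y : ∀ _ : ℕ, ℂ) 0‖^2) := by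
    have h := cu 0
    rw [if_pos rfl, show ((((0:ℕ)):ℝ)+1)/((((0:ℕ)):ℝ)+4) = (1/4 : ℝ) by norm_num] at h
    rw [h]
    have h2 := cross_sq_le (Real.sqrt (1/4)) (Real.sqrt (1/5)) (Real.sqrt_nonneg _)
      (Real.sqrt_nonneg _) ((x : ∀ _ : ℕ, ℂ) 1) ((y : ∀ _ : ℕ, ℂ) 0)
    rw [Real.sq_sqrt (by norm_num : (0:ℝ) ≤ 1/4),
      Real.sq_sqrt (by norm_num : (0:ℝ) ≤ 1/5)] at h2
    calc _ ≤ (1/4+1/5) * (‖(x : ∀ _ : ℕ, ℂ) 1‖^2 + ‖(y : ∀ _ : ℕ, ℂ) 0‖^2) := h2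
      _ = _ := by ring
  have hU1 : ‖(u : ∀ _ : ℕ, ℂ) 1‖^2 = (2/5) * ‖(x : ∀ _ : ℕ, ℂ) 2‖^2 := by
    rw [cu1val]; exact norm_sqrt_mul_sq _ (by norm_num) _
  have hS0 : ‖(s : ∀ _ : ℕ, ℂ) 0‖^2 = (13/25) * ‖(y : ∀ _ : ℕ, ℂ) 1‖^2 := by
    rw [cs0val]; exact norm_sqrt_mul_sq _ (by norm_num) _
  have HB2 : 2*‖(u : ∀ _ : ℕ, ℂ) 1‖^2 + 2*‖(s : ∀ _ : ℕ, ℂ) 0‖^2 ≤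
      ‖(x : ∀ _ : ℕ, ℂ) 2‖^2 + ‖(y : ∀ _ : ℕ, ℂ) 1‖^2 + ‖(v : ∀ _ : ℕ, ℂ) 0‖^2 := by
    set α := Real.sqrt (1/4) * Real.sqrt (2/5) with hα
    set β := Real.sqrt (1/5) * Real.sqrt (13/25) with hβ
    have hα0 : 0 ≤ α := mul_nonneg (Real.sqrt_nonneg _) (Real.sqrt_nonneg _)
    have hβ0 : 0 ≤ β := mul_nonneg (Real.sqrt_nonneg _) (Real.sqrt_nonneg _)
    have hα2 : α^2 = 1/10 := by
      rw [hα, mul_pow, Real.sq_sqrt (by norm_num : (0:ℝ) ≤ 1/4),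
        Real.sq_sqrt (by norm_num : (0:ℝ) ≤ 2/5)]; norm_num
    have hβ2 : β^2 = 13/125 := by
      rw [hβ, mul_pow, Real.sq_sqrt (by norm_num : (0:ℝ) ≤ 1/5),
        Real.sq_sqrt (by norm_num : (0:ℝ) ≤ 13/25)]; norm_num
    have hc2 : (α*β)^2 = 13/1250 := by rw [mul_pow, hα2, hβ2]; norm_num
    have hV := cross_sq_ge α β hα0 hβ0 ((x : ∀ _ : ℕ, ℂ) 2) ((y : ∀ _ : ℕ, ℂ) 1)
    rw [← cv0, hα2, hβ2] at hV
    rw [hU1, hS0]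
    set s2 := ‖(x : ∀ _ : ℕ, ℂ) 2‖
    set t2 := ‖(y : ∀ _ : ℕ, ℂ) 1‖
    have hs2 : 0 ≤ s2 := norm_nonneg _
    have ht2 : 0 ≤ t2 := norm_nonneg _
    have hc0 : 0 ≤ α*β := mul_nonneg hα0 hβ0
    nlinarith [sq_nonneg ((3/10)*s2^2 - (8/125)*t2^2), sq_nonneg (s2*t2),
      mul_nonneg (mul_nonneg hc0 hs2) ht2]
  constructor
  · exact abstractA _ _ _ _ _ _ _ _ (hasSum_norm_sq x) (hasSum_norm_sq y)
      (hasSum_norm_sq u) (hasSum_norm_sq s) (fun i => by positivity) (fun j => by positivity)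
      hU0 cu_succ hS0 cs_succ
  · exact abstractB _ _ _ _ _ _ _ _ _ _ _ _ (hasSum_norm_sq x) (hasSum_norm_sq y)
      (hasSum_norm_sq u) (hasSum_norm_sq s) (hasSum_norm_sq v) (hasSum_norm_sq t)
      (fun i => by positivity) (fun j => by positivity)
      hU0 cu_succ cs_succ HB2 cv_succ ct0 ct_succ

set_option maxHeartbeats 1000000 in
theorem stmt_11
    (T₁ T₂ T₁₂ : ℓ² →L[ℂ] ℓ²)
    (hT₁0 : T₁ (lp.single 2 0 1) = 0)
    (hT₁ : ∀ i : ℕ, T₁ (lp.single 2 (i + 1) 1) =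
      (Real.sqrt ((i + 1) / (i + 4)) : ℂ) • lp.single 2 i 1)
    (hT₂0 : T₂ (lp.single 2 0 1) = 0)
    (hT₂1 : T₂ (lp.single 2 1 1) = (Real.sqrt (13 / 25) : ℂ) • lp.single 2 0 1)
    (hT₂ : ∀ i : ℕ, T₂ (lp.single 2 (i + 2) 1) =
      (Real.sqrt ((i + 2) / (i + 3)) : ℂ) • lp.single 2 (i + 1) 1)
    (hT₁₂0 : T₁₂ (lp.single 2 0 1) = (Real.sqrt (1 / 5) : ℂ) • lp.single 2 0 1)
    (hT₁₂ : ∀ i : ℕ, T₁₂ (lp.single 2 (i + 1) 1) = 0)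
    (T : WithLp 2 (ℓ² × ℓ²) →L[ℂ] WithLp 2 (ℓ² × ℓ²))
    (hT : ∀ (x y : ℓ²),
      T ((WithLp.equiv 2 (ℓ² × ℓ²)).symm (x, y)) =
        (WithLp.equiv 2 (ℓ² × ℓ²)).symm (T₁ x + T₁₂ y, T₂ y)) :
    IsHypercontraction T 2 ∧ ¬ IsHypercontraction T₂ 2 := by
  have hc₁ : ∀ (f : ℓ²) (i : ℕ),
      (T₁ f : ∀ _ : ℕ, ℂ) i = ((Real.sqrt (((i:ℝ)+1)/((i:ℝ)+4)) : ℝ):ℂ) * f (i+1) :=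
    fun f i => shift_coord T₁ (fun i => ((Real.sqrt (((i:ℝ)+1)/((i:ℝ)+4)) : ℝ):ℂ)) hT₁0 hT₁ f i
  have hc₂ : ∀ (f : ℓ²) (i : ℕ), (T₂ f : ∀ _ : ℕ, ℂ) i =
      (if i = 0 then ((Real.sqrt (13/25) : ℝ):ℂ) else ((Real.sqrt (((i:ℝ)+1)/((i:ℝ)+2)) : ℝ):ℂ))
        * f (i+1) := by
    intro f i
    refine shift_coord T₂ (fun i => if i = 0 then ((Real.sqrt (13/25) : ℝ):ℂ)
      else ((Real.sqrt (((i:ℝ)+1)/((i:ℝ)+2)) : ℝ):ℂ)) hT₂0 ?_ f i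
    intro j
    rcases j with _ | k
    · simpa using hT₂1
    · have h := hT₂ k
      simp only [Nat.cast_add, Nat.cast_ofNat, Nat.cast_one] at h ⊢
      rw [if_neg (by omega)]
      convert h using 4 <;> push_cast <;> ring
  have hc₁₂ : ∀ (f : ℓ²) (i : ℕ),
      (T₁₂ f : ∀ _ : ℕ, ℂ) i = if i = 0 then ((Real.sqrt (1/5) : ℝ):ℂ) * f 0 else 0 :=
    fun f i => diag0_coord T₁₂ _ hT₁₂0 hT₁₂ f i
  have key := fun x y => key_ineqs hc₁ hc₂ hc₁₂ x y
  have hTz : ∀ z : WithLp 2 (ℓ² × ℓ²),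
      T z = (WithLp.equiv 2 (ℓ² × ℓ²)).symm (T₁ z.fst + T₁₂ z.snd, T₂ z.snd) := fun z => hT z.fst z.snd
  have hnorm : ∀ (x y : ℓ²),
      ‖(WithLp.equiv 2 (ℓ² × ℓ²)).symm (x, y)‖^2 = ‖x‖^2 + ‖y‖^2 := by
    intro x y
    rw [WithLp.prod_norm_sq_eq_of_L2]
    rfl
  have hzn : ∀ z : WithLp 2 (ℓ² × ℓ²), ‖z‖^2 = ‖z.fst‖^2 + ‖z.snd‖^2 := by
    intro z
    rw [WithLp.prod_norm_sq_eq_of_L2]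
  constructor
  · intro k hk1 hk2
    interval_cases k
    · refine ⟨(sa_D T 1).isSymmetric, fun z => ?_⟩
      rw [reApply_D1 T z]
      have h1 := (key z.fst z.snd).1
      have e2 : ‖T z‖^2 = ‖T₁ z.fst + T₁₂ z.snd‖^2 + ‖T₂ z.snd‖^2 := by
        rw [hTz z, hnorm]
      have e1 := hzn z
      linarith
    · refine ⟨(sa_D T 2).isSymmetric, fun z => ?_⟩
      rw [reApply_D2 T z]
      have h1 := (key z.fst z.snd).2
      have e2 : ‖T z‖^2 = ‖T₁ z.fst + T₁₂ z.snd‖^2 + ‖T₂ z.snd‖^2 := by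
        rw [hTz z, hnorm]
      have e3 : ‖T (T z)‖^2 =
          ‖T₁ (T₁ z.fst + T₁₂ z.snd) + T₁₂ (T₂ z.snd)‖^2 + ‖T₂ (T₂ z.snd)‖^2 := by
        rw [hTz z, hT (T₁ z.fst + T₁₂ z.snd) (T₂ z.snd), hnorm]
      have e1 := hzn z
      linarith
  · intro hcon
    obtain ⟨_, hpos⟩ := hcon 2 (by norm_num) le_rfl
    have h := hpos (lp.single 2 1 1)
    rw [reApply_D2 T₂ (lp.single 2 1 1)] at h
    have hn1 : ‖(lp.single 2 1 1 : ℓ²)‖ = 1 := by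
      have := lp.norm_single (E := fun _ : ℕ => ℂ) (p := 2) (by norm_num) 1 (1:ℂ)
      simpa using this
    have hn2 : ‖T₂ (lp.single 2 1 1)‖^2 = 13/25 := by
      rw [hT₂1, norm_smul]
      have hn0 : ‖(lp.single 2 0 1 : ℓ²)‖ = 1 := by
        have := lp.norm_single (E := fun _ : ℕ => ℂ) (p := 2) (by norm_num) 0 (1:ℂ)
        simpa using this
      rw [hn0, mul_one, Complex.norm_real, Real.norm_eq_abs,
        abs_of_nonneg (Real.sqrt_nonneg _), Real.sq_sqrt (by norm_num : (0:ℝ) ≤ 13/25)]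
    have hn3 : T₂ (T₂ (lp.single 2 1 1)) = 0 := by
      rw [hT₂1, map_smul, hT₂0, smul_zero]
    rw [hn1, hn2, hn3] at h
    norm_num at h
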